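/- arXiv:1709.01310 — 3 statements merged into one kernel-verified Lean document; each statement's English description precedes it below -/
import Mathlib

section
/- Let g̃ : (0,∞) → ℝ be continuously differentiable, suppose there exists M > 0 such that |g̃′| is decreasing on [M,∞) and ∫₁^∞ g̃′(r)² r dr < ∞, and set g(s) = g̃(‖s‖) for s ∈ ℝ²\{0}. Then for every unit vector e ∈ ℝ², the quantity A′_h := ∫_{{‖s‖ > 1}} (g(s + h·e/2) − g(s − h·e/2))² ds satisfies A′_h = O(h²) as h → 0⁺. -/
open MeasureTheory Filter Set Real

noncomputable section

abbrev E2 : Type := EuclideanSpace ℝ (Fin 2)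

lemma radial_integrable (f : ℝ → ℝ) (hf : Measurable f)
    (hfi : IntegrableOn (fun r : ℝ => f r * r) (Set.Ioi (0 : ℝ))) :
    Integrable (fun x : E2 => f ‖x‖) := by
  have hdim : Module.finrank ℝ E2 = 2 := by
    simpa using finrank_euclideanSpace_fin (𝕜 := ℝ) (n := 2)
  have h0 : (volume : Measure E2).restrict ({(0:E2)}ᶜ) = volume :=
    MeasureTheory.restrict_compl_singleton _
  rw [show (Integrable (fun x : E2 => f ‖x‖) volume) =
      (IntegrableOn (fun x : E2 => f ‖x‖) ({(0:E2)}ᶜ) volume) by rw [IntegrableOn, h0]]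
  rw [(MeasurableEmbedding.subtype_coe (measurableSet_singleton (0:E2)).compl).integrableOn_iff_comap
      (by rw [Subtype.range_coe]) ]
  have hpre : (Subtype.val ⁻¹' ({(0:E2)}ᶜ) : Set ({(0:E2)}ᶜ : Set E2)) = Set.univ := by
    ext x; simpa using x.2
  rw [hpre, integrableOn_univ]
  have hmp := (volume : Measure E2).measurePreserving_homeomorphUnitSphereProd
  rw [hdim] at hmp
  have hcomp : ((fun p : Metric.sphere (0:E2) 1 × Set.Ioi (0:ℝ) => f p.2.1) ∘
      (homeomorphUnitSphereProd E2)) = fun x : ({(0:E2)}ᶜ : Set E2) => f ‖(x:E2)‖ := by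
    funext x; simp
  rw [show ((fun x : E2 => f ‖x‖) ∘ Subtype.val) = fun x : ({(0:E2)}ᶜ : Set E2) => f ‖(x:E2)‖
      from rfl, ← hcomp,
    hmp.integrable_comp_emb (homeomorphUnitSphereProd E2).measurableEmbedding]
  have hg' : Integrable (fun r : Set.Ioi (0:ℝ) => f r.1) (Measure.volumeIoiPow (2-1)) := by
    rw [Measure.volumeIoiPow]
    rw [integrable_withDensity_iff (by fun_prop) (by
      filter_upwards with r using ENNReal.ofReal_lt_top)]
    have : (fun r : Set.Ioi (0:ℝ) => f r.1 * (ENNReal.ofReal (r.1 ^ (2-1))).toReal) =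
        fun r : Set.Ioi (0:ℝ) => f r.1 * r.1 := by
      funext r
      rw [ENNReal.toReal_ofReal (by simpa using pow_nonneg (le_of_lt r.2) 1)]
      simp
    rw [this]
    have := (MeasurableEmbedding.subtype_coe (measurableSet_Ioi (a := (0:ℝ)))).integrableOn_iff_comap
      (f := fun r : ℝ => f r * r) (μ := volume) (s := Set.Ioi (0:ℝ)) (by rw [Subtype.range_coe])
    rw [this] at hfi
    have hpre2 : (Subtype.val ⁻¹' (Set.Ioi (0:ℝ)) : Set (Set.Ioi (0:ℝ))) = Set.univ := by
      ext x; simpa using x.2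
    rw [hpre2, integrableOn_univ] at hfi
    exact hfi
  have hsm : Integrable (fun r : Set.Ioi (0:ℝ) => f r.1)
      ((volume : Measure E2).toSphere Set.univ • Measure.volumeIoiPow (2-1)) :=
    hg'.smul_measure (measure_ne_top _ _)
  rw [← Measure.map_snd_prod] at hsm
  exact (integrable_map_measure (hf.comp measurable_subtype_coe).aestronglyMeasurable measurable_snd.aemeasurable).mp hsm

lemma mvt_deriv (gt : ℝ → ℝ) (hd : ∀ x ∈ Set.Ioi (0:ℝ), DifferentiableAt ℝ gt x)
    (a b : ℝ) (ha : 0 < a) (hb : 0 < b) :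
    ∃ c, min a b ≤ c ∧ c ≤ max a b ∧ gt b - gt a = deriv gt c * (b - a) := by
  have key : ∀ p q : ℝ, 0 < p → p < q →
      ∃ c, min p q ≤ c ∧ c ≤ max p q ∧ gt q - gt p = deriv gt c * (q - p) := by
    intro p q hp hpq
    have hdiff : ∀ x ∈ Set.Icc p q, DifferentiableAt ℝ gt x := fun x hx =>
      hd x (lt_of_lt_of_le hp hx.1)
    obtain ⟨c, hc, hc'⟩ := exists_deriv_eq_slope gt hpq
      (fun x hx => (hdiff x hx).continuousAt.continuousWithinAt)
      (fun x hx => (hdiff x (Set.Ioo_subset_Icc_self hx)).differentiableWithinAt)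
    refine ⟨c, le_trans (min_le_left _ _) hc.1.le, le_trans hc.2.le (le_max_right _ _), ?_⟩
    rw [hc']
    exact (div_mul_cancel₀ _ (sub_ne_zero.mpr hpq.ne')).symm
  rcases lt_trichotomy a b with h | h | h
  · exact key a b ha h
  · exact ⟨a, by simp [h], by simp [h], by simp [h]⟩
  · obtain ⟨c, h1, h2, h3⟩ := key b a hb h
    refine ⟨c, by rwa [min_comm], by rwa [max_comm], by linarith⟩

set_option maxHeartbeats 1000000 in
theorem stmt1 (gt : ℝ → ℝ) (hgt : ContDiffOn ℝ 1 gt (Set.Ioi 0))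
    (M : ℝ) (hM : 0 < M)
    (hdec : AntitoneOn (fun x : ℝ => |deriv gt x|) (Set.Ici M))
    (hint : IntegrableOn (fun r : ℝ => (deriv gt r) ^ 2 * r) (Set.Ioi (1 : ℝ)))
    (e : E2) (he : ‖e‖ = 1) :
    (fun h : ℝ => ∫ s in {s : E2 | 1 < ‖s‖},
        (gt ‖s + (h / 2) • e‖ - gt ‖s - (h / 2) • e‖) ^ 2)
      =O[nhdsWithin 0 (Set.Ioi 0)] fun h : ℝ => h ^ 2 := by
  obtain ⟨M₁, hM₁2, hM₁M⟩ : ∃ M₁ : ℝ, (2:ℝ) ≤ M₁ ∧ M + 1 ≤ M₁ :=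
    ⟨max M 1 + 1, by
      constructor
      · have : (1:ℝ) ≤ max M 1 := le_max_right _ _
        linarith
      · have : M ≤ max M 1 := le_max_left _ _
        linarith⟩
  have hd : ∀ x ∈ Set.Ioi (0:ℝ), DifferentiableAt ℝ gt x := fun x hx =>
    (hgt.differentiableOn one_ne_zero).differentiableAt (isOpen_Ioi.mem_nhds hx)
  have hc' : ContinuousOn (deriv gt) (Set.Ioi 0) :=
    hgt.continuousOn_deriv_of_isOpen isOpen_Ioi le_rfl
  obtain ⟨C, hC⟩ := (isCompact_Icc (a := (1:ℝ)/2) (b := M₁ + 1/2)).exists_bound_of_continuousOn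
    (hc'.mono (fun x hx => lt_of_lt_of_le (by norm_num) hx.1))
  have hC0 : 0 ≤ C := le_trans (norm_nonneg _) (hC (1/2) ⟨le_rfl, by linarith⟩)
  -- majorant
  obtain ⟨F, hFle, hFgt, hFmeas⟩ : ∃ F : ℝ → ℝ, (∀ r, r ≤ M₁ → F r = C^2) ∧
      (∀ r, M₁ < r → F r = (deriv gt (r - 1/2))^2) ∧ Measurable F := by
    refine ⟨fun r => if r ≤ M₁ then C^2 else (deriv gt (r - 1/2))^2,
      fun r hr => if_pos hr, fun r hr => if_neg (not_le.mpr hr), ?_⟩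
    apply Measurable.ite measurableSet_Iic measurable_const
    exact ((measurable_deriv gt).comp (measurable_id.sub measurable_const)).pow_const 2
  have hFnonneg : ∀ r, 0 ≤ F r := by
    intro r
    rcases le_or_gt r M₁ with hr | hr
    · rw [hFle r hr]; positivity
    · rw [hFgt r hr]; positivity
  -- integrability of the majorant
  have hFint : IntegrableOn (fun r => F r * r) (Set.Ioi (0:ℝ)) := by
    rw [← Set.Ioc_union_Ioi_eq_Ioi (by linarith : (0:ℝ) ≤ M₁)]
    rw [integrableOn_union]
    constructor
    · apply Integrable.mono' (g := fun _ : ℝ => C^2 * M₁)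
        ((integrableOn_const_iff).mpr (Or.inr (by simp [Real.volume_Ioc])))
        ((hFmeas.mul measurable_id).aestronglyMeasurable.restrict)
      rw [ae_restrict_iff' measurableSet_Ioc]
      filter_upwards with r hr
      simp only [Pi.mul_apply, id_eq]
      rw [hFle r hr.2, Real.norm_eq_abs, abs_mul, abs_of_nonneg (sq_nonneg C),
        abs_of_pos hr.1]
      exact mul_le_mul_of_nonneg_left hr.2 (sq_nonneg C)
    · have hcong : Set.EqOn (fun r => F r * r)
          (fun r => (deriv gt (r - 1/2))^2 * r) (Set.Ioi M₁) := by
        intro r hr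
        simp only
        rw [hFgt r hr]
      apply (IntegrableOn.congr_fun · hcong.symm measurableSet_Ioi)
      -- shift by 1/2
      have hemb : MeasurableEmbedding (fun x : ℝ => x - 1/2) :=
        (MeasurableEquiv.subRight (1/2)).measurableEmbedding
      have hmp : MeasurePreserving (fun x : ℝ => x - 1/2) volume volume :=
        measurePreserving_sub_right volume _
      have := hmp.integrableOn_comp_preimage hemb
        (f := fun u : ℝ => (deriv gt u)^2 * (u + 1/2)) (s := Set.Ioi (M₁ - 1/2))
      have hpre : ((fun x : ℝ => x - 1/2) ⁻¹' Set.Ioi (M₁ - 1/2)) = Set.Ioi M₁ := by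
        ext x
        simp only [Set.mem_preimage, Set.mem_Ioi]
        constructor <;> intro hx <;> linarith
      rw [hpre] at this
      have hcomp : ((fun u : ℝ => (deriv gt u)^2 * (u + 1/2)) ∘ (fun x : ℝ => x - 1/2)) =
          fun r : ℝ => (deriv gt (r - 1/2))^2 * r := by
        funext r
        simp only [Function.comp_apply, sub_add_cancel]
      rw [hcomp] at this
      rw [this]
      -- now integrability on Ioi (M₁ - 1/2) ⊆ Ioi 1
      have hsub : Set.Ioi (M₁ - 1/2) ⊆ Set.Ioi (1:ℝ) := fun x hx => by
        simp only [Set.mem_Ioi] at *; linarith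
      apply Integrable.mono' (g := fun u : ℝ => 2 * ((deriv gt u)^2 * u))
        (((hint.mono_set hsub).const_mul 2))
        ((((measurable_deriv gt).pow_const 2).mul (measurable_id.add_const _)).aestronglyMeasurable.restrict)
      rw [ae_restrict_iff' measurableSet_Ioi]
      filter_upwards with u hu
      simp only [Set.mem_Ioi] at hu
      simp only [Pi.mul_apply, id_eq]
      have hu1 : (1:ℝ) ≤ u := by linarith
      rw [Real.norm_eq_abs, abs_of_nonneg (by positivity)]
      nlinarith [sq_nonneg (deriv gt u)]
  have hGint : Integrable (fun s : E2 => F ‖s‖) := radial_integrable F hFmeas hFint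
  -- pointwise bound
  have key : ∀ h : ℝ, 0 < h → h ≤ 1 → ∀ s : E2, 1 < ‖s‖ →
      (gt ‖s + (h / 2) • e‖ - gt ‖s - (h / 2) • e‖) ^ 2 ≤ h^2 * F ‖s‖ := by
    intro h hh0 hh1 s hs
    set x : E2 := (h/2) • e with hxdef
    have hxnorm : ‖x‖ = h/2 := by
      rw [hxdef, norm_smul, he, Real.norm_eq_abs, abs_of_pos (by linarith), mul_one]
    set a : ℝ := ‖s - x‖ with hadef
    set b : ℝ := ‖s + x‖ with hbdef
    have hbs : |b - ‖s‖| ≤ h/2 := by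
      rw [hbdef]
      simpa [hxnorm] using abs_norm_sub_norm_le (s + x) s
    have has : |a - ‖s‖| ≤ h/2 := by
      rw [hadef]
      simpa [hxnorm] using abs_norm_sub_norm_le (s - x) s
    have hab : |b - a| ≤ h := by
      have h1 : (s + x) - (s - x) = (2:ℝ) • x := by
        rw [two_smul]; abel
      have := abs_norm_sub_norm_le (s + x) (s - x)
      rw [h1] at this
      rw [norm_smul, Real.norm_eq_abs] at this
      simp only [hxnorm] at this
      calc |b - a| ≤ |(2:ℝ)| * (h/2) := this
        _ = h := by rw [abs_of_nonneg (by norm_num : (0:ℝ) ≤ 2)]; ring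
    have habs := abs_le.mp hbs
    have haas := abs_le.mp has
    have ha0 : 0 < a := by cases' haas with h1 h2; linarith
    have hb0 : 0 < b := by cases' habs with h1 h2; linarith
    obtain ⟨c, hc1, hc2, hc3⟩ := mvt_deriv gt hd a b ha0 hb0
    have hclo : ‖s‖ - 1/2 ≤ c := by
      rcases le_total a b with hab' | hab'
      · rw [min_eq_left hab'] at hc1; linarith
      · rw [min_eq_right hab'] at hc1; linarith
    have hchi : c ≤ ‖s‖ + 1/2 := by
      rcases le_total a b with hab' | hab'
      · rw [max_eq_right hab'] at hc2; linarith
      · rw [max_eq_left hab'] at hc2; linarith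
    have hc0 : 0 < c := by linarith
    have hsq : (gt b - gt a)^2 ≤ (deriv gt c)^2 * h^2 := by
      rw [hc3, mul_pow]
      apply mul_le_mul_of_nonneg_left _ (sq_nonneg _)
      calc (b - a)^2 = |b - a|^2 := (sq_abs _).symm
        _ ≤ h^2 := by nlinarith [abs_nonneg (b - a)]
    have hbound : (deriv gt c)^2 ≤ F ‖s‖ := by
      by_cases hcase : ‖s‖ ≤ M₁
      · rw [hFle _ hcase]
        have hmem : c ∈ Set.Icc ((1:ℝ)/2) (M₁ + 1/2) := ⟨by linarith, by linarith⟩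
        have := hC c hmem
        rw [Real.norm_eq_abs] at this
        calc (deriv gt c)^2 = |deriv gt c|^2 := (sq_abs _).symm
          _ ≤ C^2 := by nlinarith [abs_nonneg (deriv gt c)]
      · push_neg at hcase
        rw [hFgt _ hcase]
        have hm1 : ‖s‖ - 1/2 ∈ Set.Ici M := by
          simp only [Set.mem_Ici]; linarith
        have hm2 : c ∈ Set.Ici M := by
          simp only [Set.mem_Ici]; linarith
        have := hdec hm1 hm2 hclo
        dsimp only at this
        calc (deriv gt c)^2 = |deriv gt c|^2 := (sq_abs _).symm
          _ ≤ |deriv gt (‖s‖ - 1/2)|^2 := by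
              nlinarith [abs_nonneg (deriv gt c), abs_nonneg (deriv gt (‖s‖ - 1/2))]
          _ = (deriv gt (‖s‖ - 1/2))^2 := sq_abs _
    calc (gt b - gt a)^2 ≤ (deriv gt c)^2 * h^2 := hsq
      _ ≤ F ‖s‖ * h^2 := mul_le_mul_of_nonneg_right hbound (sq_nonneg h)
      _ = h^2 * F ‖s‖ := mul_comm _ _
  -- main asymptotic argument
  rw [Asymptotics.isBigO_iff]
  set U : Set E2 := {s : E2 | 1 < ‖s‖} with hUdef
  have hUmeas : MeasurableSet U := (isOpen_lt continuous_const continuous_norm).measurableSet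
  refine ⟨∫ s in U, F ‖s‖, ?_⟩
  filter_upwards [Ioo_mem_nhdsGT_of_mem (by norm_num : (0:ℝ) ∈ Set.Ico 0 1)] with h hh
  obtain ⟨hh0, hh1⟩ := hh
  have hGU : IntegrableOn (fun s : E2 => h^2 * F ‖s‖) U :=
    (hGint.integrableOn).const_mul _
  -- measurability of the integrand
  have hmaps : ∀ (σ : ℝ), |σ| ≤ 1/2 → Set.MapsTo (fun s : E2 => ‖s + σ • e‖) U (Set.Ioi 0) := by
    intro σ hσ s hs
    simp only [hUdef, Set.mem_setOf_eq] at hs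
    have h1 := abs_norm_sub_norm_le (s + σ • e) s
    rw [add_sub_cancel_left, norm_smul, he, mul_one, Real.norm_eq_abs] at h1
    have := abs_le.mp h1
    simp only [Set.mem_Ioi]
    cases' this with h2 h3
    linarith
  have hσbound : |h/2| ≤ 1/2 := by rw [abs_of_pos (by linarith)]; linarith
  have hσbound' : |-(h/2)| ≤ 1/2 := by rw [abs_neg]; exact hσbound
  have hcont1 : ContinuousOn (fun s : E2 => gt ‖s + (h/2) • e‖) U :=
    hgt.continuousOn.comp (Continuous.continuousOn (by fun_prop)) (hmaps (h/2) hσbound)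
  have hcont2 : ContinuousOn (fun s : E2 => gt ‖s - (h/2) • e‖) U := by
    have : ∀ s : E2, s - (h/2) • e = s + (-(h/2)) • e := by
      intro s; rw [neg_smul]; abel
    simp only [this]
    exact hgt.continuousOn.comp (Continuous.continuousOn (by fun_prop)) (hmaps (-(h/2)) hσbound')
  have hintcont : ContinuousOn
      (fun s : E2 => (gt ‖s + (h / 2) • e‖ - gt ‖s - (h / 2) • e‖) ^ 2) U :=
    (hcont1.sub hcont2).pow 2
  have hintmeas := hintcont.aestronglyMeasurable (μ := volume) hUmeas
  have haebound : ∀ᵐ s ∂(volume.restrict U),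
      ‖(gt ‖s + (h / 2) • e‖ - gt ‖s - (h / 2) • e‖) ^ 2‖ ≤ h^2 * F ‖s‖ := by
    rw [ae_restrict_iff' hUmeas]
    filter_upwards with s hs
    rw [Real.norm_eq_abs, abs_of_nonneg (sq_nonneg _)]
    exact key h hh0 hh1.le s hs
  have hintint : IntegrableOn
      (fun s : E2 => (gt ‖s + (h / 2) • e‖ - gt ‖s - (h / 2) • e‖) ^ 2) U :=
    Integrable.mono' hGU hintmeas haebound
  have hmono : ∫ s in U, (gt ‖s + (h / 2) • e‖ - gt ‖s - (h / 2) • e‖) ^ 2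
      ≤ ∫ s in U, h^2 * F ‖s‖ := by
    apply setIntegral_mono_on hintint hGU hUmeas
    intro s hs
    exact key h hh0 hh1.le s hs
  have hnn : 0 ≤ ∫ s in U, (gt ‖s + (h / 2) • e‖ - gt ‖s - (h / 2) • e‖) ^ 2 :=
    setIntegral_nonneg hUmeas (fun s _ => sq_nonneg _)
  rw [Real.norm_eq_abs, abs_of_nonneg hnn, Real.norm_eq_abs, abs_of_nonneg (sq_nonneg h)]
  calc ∫ s in U, (gt ‖s + (h / 2) • e‖ - gt ‖s - (h / 2) • e‖) ^ 2
      ≤ ∫ s in U, h^2 * F ‖s‖ := hmono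
    _ = h^2 * ∫ s in U, F ‖s‖ := integral_const_mul _ _
    _ = (∫ s in U, F ‖s‖) * h^2 := mul_comm _ _
end
end

section
/- For every α ∈ (−1,0) and every unit vector e ∈ ℝ², the integral ∫_{ℝ²} (‖x + e/2‖^α − ‖x − e/2‖^α)² dx is finite. -/
open MeasureTheory Filter Set Real

noncomputable section

lemma measurable_rpow_const' (p : ℝ) : Measurable (fun t : ℝ => t ^ p) := by
  apply measurable_of_continuousOn_compl_singleton (0 : ℝ)
  intro t ht
  exact (Real.continuousAt_rpow_const t p (Or.inl ht)).continuousWithinAt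

lemma absRpowInt {q : ℝ} (hq : -1 < q) (R : ℝ) :
    IntegrableOn (fun t : ℝ => |t| ^ q) (Set.Icc (-R) R) := by
  have h1 : IntegrableOn (fun t : ℝ => |t| ^ q) (Set.Ioc 0 R) := by
    refine ((intervalIntegral.intervalIntegrable_rpow' (a := 0) (b := R) hq).1).congr_fun
      (fun t ht => ?_) measurableSet_Ioc
    rw [abs_of_pos ht.1]
  have h1' : IntegrableOn (fun t : ℝ => |t| ^ q) (Set.Icc 0 R) :=
    (integrableOn_Icc_iff_integrableOn_Ioc).2 h1
  have h2 : IntegrableOn (fun t : ℝ => |t| ^ q) (Set.Icc (-R) 0) := by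
    have hG : Integrable (Set.indicator (Set.Icc 0 R) (fun t : ℝ => |t| ^ q)) :=
      (integrable_indicator_iff measurableSet_Icc).2 h1'
    have hGn := hG.comp_neg
    have heq : (fun t : ℝ => Set.indicator (Set.Icc 0 R) (fun s : ℝ => |s| ^ q) (-t))
        = Set.indicator (Set.Icc (-R) 0) (fun s : ℝ => |s| ^ q) := by
      funext t
      have hmem : -t ∈ Set.Icc 0 R ↔ t ∈ Set.Icc (-R) 0 := by
        simp only [Set.mem_Icc]
        constructor <;> intro h <;> constructor <;> linarith [h.1, h.2]
      by_cases ht : -t ∈ Set.Icc 0 R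
      · rw [Set.indicator_of_mem ht, Set.indicator_of_mem (hmem.1 ht), abs_neg]
      · rw [Set.indicator_of_notMem ht, Set.indicator_of_notMem (fun hc => ht (hmem.2 hc))]
    rw [heq] at hGn
    exact (integrable_indicator_iff measurableSet_Icc).1 hGn
  have hsub : Set.Icc (-R) R ⊆ Set.Icc (-R) 0 ∪ Set.Icc 0 R := by
    intro t ht
    rcases le_total t 0 with h | h
    · exact Or.inl ⟨ht.1, h⟩
    · exact Or.inr ⟨h, ht.2⟩
  exact (h2.union h1').mono_set hsub

lemma ballInt {p : ℝ} (hp1 : -2 < p) (hp2 : p < 0) (R : ℝ) :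
    IntegrableOn (fun x : E2 => ‖x‖ ^ p) (Metric.closedBall 0 R) := by
  set q := p / 2 with hqdef
  have hq1 : -1 < q := by rw [hqdef]; linarith
  set F := Set.indicator (Set.Icc (-R) R) (fun t : ℝ => |t| ^ q) with hFdef
  have hF : Integrable F :=
    (integrable_indicator_iff measurableSet_Icc).2 (absRpowInt hq1 R)
  have hFnonneg : ∀ t, 0 ≤ F t :=
    fun t => Set.indicator_nonneg (fun s _ => Real.rpow_nonneg (abs_nonneg s) q) t
  have hprod : Integrable (fun z : ℝ × ℝ => F z.1 * F z.2) := by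
    rw [Measure.volume_eq_prod]
    exact hF.mul_prod hF
  set S : Set (ℝ × ℝ) := {z | Real.sqrt (z.1 ^ 2 + z.2 ^ 2) ≤ R} with hSdef
  have hSmeas : MeasurableSet S := by
    apply measurableSet_le _ measurable_const
    exact ((measurable_fst.pow_const 2).add (measurable_snd.pow_const 2)).sqrt
  set h : ℝ × ℝ → ℝ := S.indicator (fun z => Real.sqrt (z.1 ^ 2 + z.2 ^ 2) ^ p) with hhdef
  have hmeas : Measurable h := by
    apply Measurable.indicator _ hSmeas
    exact (measurable_rpow_const' p).comp
      ((measurable_fst.pow_const 2).add (measurable_snd.pow_const 2)).sqrt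
  have hint : Integrable h := by
    refine Integrable.mono' hprod hmeas.aestronglyMeasurable ?_
    have h1 : ∀ᵐ z : ℝ × ℝ, z.1 ≠ 0 := by
      refine ae_iff.2 ?_
      have he2 : {z : ℝ × ℝ | ¬z.1 ≠ 0} = ({0} : Set ℝ) ×ˢ (Set.univ : Set ℝ) := by
        ext z; simp only [Set.mem_setOf_eq, not_not, Set.mem_prod, Set.mem_singleton_iff, Set.mem_univ, and_true, true_and]
      rw [he2, Measure.volume_eq_prod, Measure.prod_prod]
      simp
    have h2 : ∀ᵐ z : ℝ × ℝ, z.2 ≠ 0 := by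
      refine ae_iff.2 ?_
      have he2 : {z : ℝ × ℝ | ¬z.2 ≠ 0} = (Set.univ : Set ℝ) ×ˢ ({0} : Set ℝ) := by
        ext z; simp only [Set.mem_setOf_eq, not_not, Set.mem_prod, Set.mem_singleton_iff, Set.mem_univ, and_true, true_and]
      rw [he2, Measure.volume_eq_prod, Measure.prod_prod]
      simp
    filter_upwards [h1, h2] with z hz1 hz2
    by_cases hzS : z ∈ S
    · rw [hhdef, Set.indicator_of_mem hzS,
        Real.norm_eq_abs, abs_of_nonneg (Real.rpow_nonneg (Real.sqrt_nonneg _) p)]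
      have hzR : Real.sqrt (z.1 ^ 2 + z.2 ^ 2) ≤ R := hzS
      have habs1 : |z.1| ≤ Real.sqrt (z.1 ^ 2 + z.2 ^ 2) := by
        rw [← Real.sqrt_sq_eq_abs]
        exact Real.sqrt_le_sqrt (by nlinarith [sq_nonneg z.2])
      have habs2 : |z.2| ≤ Real.sqrt (z.1 ^ 2 + z.2 ^ 2) := by
        rw [← Real.sqrt_sq_eq_abs]
        exact Real.sqrt_le_sqrt (by nlinarith [sq_nonneg z.1])
      have hz1m : z.1 ∈ Set.Icc (-R) R := abs_le.1 (habs1.trans hzR)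
      have hz2m : z.2 ∈ Set.Icc (-R) R := abs_le.1 (habs2.trans hzR)
      have hm : (0:ℝ) < Real.sqrt (|z.1| * |z.2|) :=
        Real.sqrt_pos.2 (mul_pos (abs_pos.2 hz1) (abs_pos.2 hz2))
      have hle : Real.sqrt (|z.1| * |z.2|) ≤ Real.sqrt (z.1 ^ 2 + z.2 ^ 2) := by
        apply Real.sqrt_le_sqrt
        nlinarith [sq_abs z.1, sq_abs z.2, sq_nonneg (|z.1| - |z.2|)]
      have key : Real.sqrt (z.1 ^ 2 + z.2 ^ 2) ^ p ≤ |z.1| ^ q * |z.2| ^ q := by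
        calc Real.sqrt (z.1 ^ 2 + z.2 ^ 2) ^ p ≤ Real.sqrt (|z.1| * |z.2|) ^ p :=
              Real.rpow_le_rpow_of_nonpos hm hle hp2.le
          _ = (|z.1| * |z.2|) ^ q := by
              rw [Real.sqrt_eq_rpow, ← Real.rpow_mul (by positivity)]
              norm_num [hqdef]
              ring_nf
          _ = |z.1| ^ q * |z.2| ^ q :=
              Real.mul_rpow (abs_nonneg _) (abs_nonneg _)
      calc Real.sqrt (z.1 ^ 2 + z.2 ^ 2) ^ p ≤ |z.1| ^ q * |z.2| ^ q := key
        _ = F z.1 * F z.2 := by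
            rw [hFdef]
            rw [Set.indicator_of_mem hz1m, Set.indicator_of_mem hz2m]
    · rw [hhdef, Set.indicator_of_notMem hzS]
      simp only [norm_zero]
      exact mul_nonneg (hFnonneg _) (hFnonneg _)
  -- transport to E2
  set φ : E2 ≃ᵐ ℝ × ℝ :=
    (MeasurableEquiv.toLp 2 (Fin 2 → ℝ)).symm.trans (MeasurableEquiv.piFinTwo fun _ => ℝ) with hφdef
  have φmp : MeasurePreserving φ volume volume :=
    (volume_preserving_piFinTwo fun _ => ℝ).comp
      (EuclideanSpace.volume_preserving_symm_measurableEquiv_toLp (Fin 2))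
  have hnorm : ∀ x : E2, ‖x‖ = Real.sqrt ((x 0) ^ 2 + (x 1) ^ 2) := by
    intro x
    rw [EuclideanSpace.norm_eq]
    simp [Fin.sum_univ_two, Real.norm_eq_abs, sq_abs]
  have hcomp : h ∘ φ = Set.indicator (Metric.closedBall (0:E2) R) (fun x => ‖x‖ ^ p) := by
    funext x
    have hφx : φ x = (x 0, x 1) := rfl
    simp only [Function.comp_apply, hφx, hhdef]
    have hmemiff : ((x 0, x 1) : ℝ × ℝ) ∈ S ↔ x ∈ Metric.closedBall (0:E2) R := by
      rw [Metric.mem_closedBall, dist_zero_right, hnorm x, hSdef]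
      exact Iff.rfl
    by_cases hx : x ∈ Metric.closedBall (0:E2) R
    · rw [Set.indicator_of_mem (hmemiff.2 hx), Set.indicator_of_mem hx, hnorm x]
    · rw [Set.indicator_of_notMem (fun hc => hx (hmemiff.1 hc)), Set.indicator_of_notMem hx]
  have : Integrable (Set.indicator (Metric.closedBall (0:E2) R) (fun x => ‖x‖ ^ p)) := by
    rw [← hcomp]
    exact (φmp.integrable_comp_emb (φ.measurableEmbedding)).2 hint
  exact (integrable_indicator_iff measurableSet_closedBall).1 this

-- MVT lemma
lemma rpow_sub_rpow_le {α m a b : ℝ} (hα : α < 0) (hm : 0 < m) (ha : m ≤ a) (hb : m ≤ b) :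
    |a ^ α - b ^ α| ≤ |α| * m ^ (α - 1) * |a - b| := by
  have H : ∀ x ∈ Set.Ici m, HasDerivWithinAt (fun t : ℝ => t ^ α) (α * x ^ (α - 1)) (Set.Ici m) x :=
    fun x hx => (Real.hasDerivAt_rpow_const (Or.inl (hm.trans_le hx).ne')).hasDerivWithinAt
  have bound : ∀ x ∈ Set.Ici m, ‖α * x ^ (α - 1)‖ ≤ |α| * m ^ (α - 1) := by
    intro x hx
    rw [norm_mul, Real.norm_eq_abs, Real.norm_eq_abs,
      abs_of_nonneg (Real.rpow_nonneg (hm.trans_le hx).le _)]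
    exact mul_le_mul_of_nonneg_left
      (Real.rpow_le_rpow_of_nonpos hm hx (by linarith)) (abs_nonneg α)
  have := Convex.norm_image_sub_le_of_norm_hasDerivWithin_le H bound (convex_Ici m) hb ha
  simpa [Real.norm_eq_abs] using this

theorem stmt2 (α : ℝ) (hα : α ∈ Set.Ioo (-1 : ℝ) 0) (e : E2) (he : ‖e‖ = 1) :
    MeasureTheory.Integrable (fun x : E2 =>
      (‖x + (1 / 2 : ℝ) • e‖ ^ α - ‖x - (1 / 2 : ℝ) • e‖ ^ α) ^ 2) := by
  obtain ⟨hα1, hα2⟩ := hα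
  set v : E2 := (1 / 2 : ℝ) • e with hvdef
  have hv_norm : ‖v‖ = 1 / 2 := by
    rw [hvdef, norm_smul, he]
    norm_num
  set f : E2 → ℝ := fun x => (‖x + v‖ ^ α - ‖x - v‖ ^ α) ^ 2 with hfdef
  have hmeas : AEStronglyMeasurable f volume := by
    apply Measurable.aestronglyMeasurable
    have m1 : Measurable fun x : E2 => ‖x + v‖ ^ α :=
      (measurable_rpow_const' α).comp ((continuous_id.add continuous_const).norm.measurable)
    have m2 : Measurable fun x : E2 => ‖x - v‖ ^ α :=
      (measurable_rpow_const' α).comp ((continuous_id.sub continuous_const).norm.measurable)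
    exact (m1.sub m2).pow_const 2
  -- squared-rpow identity
  have hsq : ∀ c : ℝ, 0 ≤ c → (c ^ α) ^ 2 = c ^ (2 * α) := by
    intro c hc
    rw [← Real.rpow_natCast (c ^ α) 2, ← Real.rpow_mul hc]
    norm_num
    ring_nf
  -- Part 1: on the closed ball
  have key : ∀ w : E2, ‖w‖ ≤ 1 / 2 →
      IntegrableOn (fun x : E2 => ‖x + w‖ ^ (2 * α)) (Metric.closedBall 0 1) := by
    intro w hw
    have hbig := ballInt (p := 2 * α) (by linarith) (by linarith) 2
    have hind : Integrable (Set.indicator (Metric.closedBall (0:E2) 2)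
        (fun x => ‖x‖ ^ (2 * α))) :=
      (integrable_indicator_iff measurableSet_closedBall).2 hbig
    have htrans := hind.comp_add_right w
    refine (htrans.integrableOn).congr_fun (fun x hx => ?_) measurableSet_closedBall
    have hx1 : ‖x‖ ≤ 1 := by
      rwa [Metric.mem_closedBall, dist_zero_right] at hx
    have : x + w ∈ Metric.closedBall (0:E2) 2 := by
      rw [Metric.mem_closedBall, dist_zero_right]
      calc ‖x + w‖ ≤ ‖x‖ + ‖w‖ := norm_add_le _ _
        _ ≤ 2 := by linarith
    beta_reduce
    rw [Set.indicator_of_mem this]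
  have hB : IntegrableOn f (Metric.closedBall 0 1) := by
    have g1 := key v hv_norm.le
    have g2 := key (-v) (by rw [norm_neg, hv_norm])
    have g2' : IntegrableOn (fun x : E2 => ‖x - v‖ ^ (2 * α)) (Metric.closedBall 0 1) := by
      refine g2.congr_fun (fun x _ => ?_) measurableSet_closedBall
      rw [sub_eq_add_neg]
    refine Integrable.mono' (((g1.const_mul 2).add (g2'.const_mul 2))) hmeas.restrict ?_
    refine (ae_restrict_iff' measurableSet_closedBall).2 (ae_of_all _ fun x _ => ?_)
    have e1 := hsq ‖x + v‖ (norm_nonneg _)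
    have e2 := hsq ‖x - v‖ (norm_nonneg _)
    show ‖(‖x + v‖ ^ α - ‖x - v‖ ^ α) ^ 2‖ ≤ 2 * ‖x + v‖ ^ (2 * α) + 2 * ‖x - v‖ ^ (2 * α)
    rw [Real.norm_eq_abs, abs_of_nonneg (sq_nonneg _)]
    nlinarith [sq_nonneg (‖x + v‖ ^ α + ‖x - v‖ ^ α), sq_nonneg (‖x + v‖ ^ α - ‖x - v‖ ^ α)]
  -- Part 2: on the complement
  have hC : IntegrableOn f (Metric.closedBall (0:E2) 1)ᶜ := by
    set r : ℝ := 2 - 2 * α with hrdef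
    have hr : (Module.finrank ℝ E2 : ℝ) < r := by
      simp only [finrank_euclideanSpace_fin]
      rw [hrdef]; norm_num; linarith
    have hint := (integrable_one_add_norm (E := E2) (μ := volume) hr).const_mul (α ^ 2 * 4 ^ r)
    refine Integrable.mono' hint.integrableOn hmeas.restrict ?_
    refine (ae_restrict_iff' measurableSet_closedBall.compl).2
      (ae_of_all _ fun x hx => ?_)
    have hx1 : 1 < ‖x‖ := by
      simp only [Set.mem_compl_iff, Metric.mem_closedBall, dist_zero_right, not_le] at hx
      exact hx
    have hm0 : (0:ℝ) < ‖x‖ / 2 := by linarith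
    have hma : ‖x‖ / 2 ≤ ‖x + v‖ := by
      have := norm_add_le (x + v) (-v)
      simp only [add_neg_cancel_right, norm_neg] at this
      rw [hv_norm] at this
      linarith
    have hmb : ‖x‖ / 2 ≤ ‖x - v‖ := by
      have := norm_add_le (x - v) v
      simp only [sub_add_cancel] at this
      rw [hv_norm] at this
      linarith
    have hdiff : |‖x + v‖ - ‖x - v‖| ≤ 1 := by
      have h1 := abs_norm_sub_norm_le (x + v) (x - v)
      have h2 : x + v - (x - v) = v + v := by abel
      rw [h2] at h1
      have h3 : ‖v + v‖ ≤ 1 := by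
        have := norm_add_le v v
        rw [hv_norm] at this
        linarith
      linarith
    have mvt := rpow_sub_rpow_le hα2 hm0 hma hmb
    have hbound : |‖x + v‖ ^ α - ‖x - v‖ ^ α| ≤ |α| * (‖x‖ / 2) ^ (α - 1) := by
      calc |‖x + v‖ ^ α - ‖x - v‖ ^ α| ≤ |α| * (‖x‖ / 2) ^ (α - 1) * |‖x + v‖ - ‖x - v‖| := mvt
        _ ≤ |α| * (‖x‖ / 2) ^ (α - 1) * 1 := by
            apply mul_le_mul_of_nonneg_left hdiff
            positivity
        _ = |α| * (‖x‖ / 2) ^ (α - 1) := by ring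
    rw [hfdef, Real.norm_eq_abs, abs_of_nonneg (sq_nonneg _)]
    have step1 : (‖x + v‖ ^ α - ‖x - v‖ ^ α) ^ 2 ≤ (|α| * (‖x‖ / 2) ^ (α - 1)) ^ 2 := by
      rw [← sq_abs (‖x + v‖ ^ α - ‖x - v‖ ^ α)]
      apply pow_le_pow_left₀ (abs_nonneg _) hbound
    have step2 : (|α| * (‖x‖ / 2) ^ (α - 1)) ^ 2 = α ^ 2 * (‖x‖ / 2) ^ (2 * α - 2) := by
      rw [mul_pow, sq_abs]
      congr 1
      rw [← Real.rpow_natCast ((‖x‖ / 2) ^ (α - 1)) 2, ← Real.rpow_mul hm0.le]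
      norm_num
      ring_nf
    have step3 : (‖x‖ / 2) ^ (2 * α - 2) ≤ ((1 + ‖x‖) / 4) ^ (2 * α - 2) := by
      apply Real.rpow_le_rpow_of_nonpos (by positivity) (by linarith) (by linarith)
    have step4 : ((1 + ‖x‖) / 4) ^ (2 * α - 2) = 4 ^ r * (1 + ‖x‖) ^ (-r) := by
      rw [Real.div_rpow (by positivity) (by norm_num)]
      rw [show (2 * α - 2 : ℝ) = -r by rw [hrdef]; ring]
      rw [Real.rpow_neg (by norm_num : (0:ℝ) ≤ 4)]
      field_simp
    calc (‖x + v‖ ^ α - ‖x - v‖ ^ α) ^ 2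
        ≤ α ^ 2 * (‖x‖ / 2) ^ (2 * α - 2) := by rw [← step2]; exact step1
      _ ≤ α ^ 2 * ((1 + ‖x‖) / 4) ^ (2 * α - 2) :=
          mul_le_mul_of_nonneg_left step3 (sq_nonneg α)
      _ = α ^ 2 * 4 ^ r * (1 + ‖x‖) ^ (-r) := by rw [step4]; ring
  rw [← integrableOn_univ, ← Set.union_compl_self (Metric.closedBall (0:E2) 1)]
  exact hB.union hC
end
end

section
/- (Lemma 5.1(i).) Let α ∈ ℝ, let L : (0,∞) → (0,∞) be slowly varying at 0, continuously differentiable on (0,∞), bounded away from 0 on every interval (u, √2] with u > 0, and satisfy |L′(x)| ≤ C(1 + x^{−1}) for all x ∈ (0,1] and some C > 0. Then for every j ∈ ℤ²\{(0,0)} and every b_j ∈ □j, lim_{n→∞} ∫_{□j} ( ‖x‖^α · L(‖x‖/n)/L(1/n) − ‖b_j‖^α · L(‖b_j‖/n)/L(1/n) )² dx = ∫_{□j} (‖x‖^α − ‖b_j‖^α)² dx. -/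
open MeasureTheory Filter Set Real

noncomputable section

/-- The closed square of side length `r` centred at `c`. -/
def sqC (c : E2) (r : ℝ) : Set E2 :=
  {x : E2 | |x 0 - c 0| ≤ r / 2 ∧ |x 1 - c 1| ≤ r / 2}

/-- The point of `ℝ²` corresponding to `j ∈ ℤ²`. -/
def jv (j : ℤ × ℤ) : E2 := WithLp.toLp 2 ![(j.1 : ℝ), (j.2 : ℝ)]

/-- `L` is slowly varying at `0`. -/
def SlowlyVaryingAtZero (L : ℝ → ℝ) : Prop :=
  ∀ δ : ℝ, 0 < δ → Tendsto (fun x => L (δ * x) / L x) (nhdsWithin 0 (Set.Ioi 0)) (nhds 1)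

/-- Small-interval uniform convergence, via Baire category. -/
lemma uct_small (h : ℝ → ℝ) (hc : Continuous h)
    (hp : ∀ u : ℝ, Tendsto (fun x => h (x + u) - h x) atTop (nhds 0))
    {ε : ℝ} (hε : 0 < ε) :
    ∃ δ > (0:ℝ), ∃ X : ℝ, ∀ x ≥ X, ∀ u ∈ Icc (0:ℝ) δ, |h (x + u) - h x| ≤ ε := by
  set E : ℕ → Set ℝ := fun n => {u | ∀ x : ℝ, (n:ℝ) ≤ x → |h (x + u) - h x| ≤ ε / 2} with hE
  have hEc : ∀ n, IsClosed (E n) := by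
    intro n
    have : E n = ⋂ x ∈ Ici (n:ℝ), {u : ℝ | |h (x + u) - h x| ≤ ε / 2} := by
      ext u; simp [hE, Set.mem_iInter]
    rw [this]
    refine isClosed_biInter fun x hx => ?_
    have hco : Continuous fun u : ℝ => |h (x + u) - h x| := by
      apply Continuous.abs
      exact (hc.comp (continuous_const.add continuous_id)).sub continuous_const
    exact isClosed_le hco continuous_const
  have hEu : ⋃ n, E n = univ := by
    ext u
    simp only [Set.mem_iUnion, Set.mem_univ, iff_true]
    have h1 : ∀ᶠ y in nhds (0:ℝ), |y| ≤ ε / 2 := by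
      have := Metric.closedBall_mem_nhds (0:ℝ) (half_pos hε)
      filter_upwards [this] with y hy
      simpa [Real.dist_eq] using hy
    have h2 := (hp u).eventually h1
    obtain ⟨X, hX⟩ := eventually_atTop.mp h2
    refine ⟨⌈X⌉₊, fun x hx => hX x (le_trans (Nat.le_ceil X) hx)⟩
  obtain ⟨n, c, hcmem⟩ := nonempty_interior_of_iUnion_of_closed hEc hEu
  obtain ⟨δ, hδ, hball⟩ := Metric.mem_nhds_iff.mp (mem_interior_iff_mem_nhds.mp hcmem)
  refine ⟨δ / 2, half_pos hδ, (n:ℝ) + |c|, fun x hx u hu => ?_⟩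
  have hcE : c ∈ E n := hball (Metric.mem_ball_self hδ)
  have hcuE : c + u ∈ E n := by
    apply hball
    rw [Metric.mem_ball, Real.dist_eq]
    have : |c + u - c| = |u| := by ring_nf
    rw [this]
    rw [abs_of_nonneg hu.1]
    linarith [hu.2]
  have hxc : (n:ℝ) ≤ x - c := by
    have := le_abs_self c
    linarith
  have e1 : h (x + u) - h x =
      (h ((x - c) + (c + u)) - h (x - c)) - (h ((x - c) + c) - h (x - c)) := by
    ring_nf
  rw [e1]
  have b1 := hcuE (x - c) hxc
  have b2 := hcE (x - c) hxc
  calc |(h ((x - c) + (c + u)) - h (x - c)) - (h ((x - c) + c) - h (x - c))|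
      ≤ |h ((x - c) + (c + u)) - h (x - c)| + |h ((x - c) + c) - h (x - c)| := abs_sub _ _
    _ ≤ ε / 2 + ε / 2 := add_le_add b1 b2
    _ = ε := by ring

/-- Karamata-type uniform convergence on compact intervals. -/
lemma uct (h : ℝ → ℝ) (hc : Continuous h)
    (hp : ∀ u : ℝ, Tendsto (fun x => h (x + u) - h x) atTop (nhds 0))
    (A B : ℝ) {ε : ℝ} (hε : 0 < ε) :
    ∃ X : ℝ, ∀ x ≥ X, ∀ u ∈ Icc A B, |h (x + u) - h x| ≤ ε := by
  obtain ⟨δ, hδ, X₀, hX₀⟩ := uct_small h hc hp (half_pos hε)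
  set N : ℕ := ⌈(B - A) / δ⌉₊ with hN
  have h1 : ∀ᶠ x : ℝ in atTop, ∀ i ∈ Finset.range (N+1),
      |h (x + (A + i * δ)) - h x| ≤ ε / 2 := by
    rw [eventually_all_finset]
    intro i _
    have hy : ∀ᶠ y in nhds (0:ℝ), |y| ≤ ε / 2 := by
      filter_upwards [Metric.closedBall_mem_nhds (0:ℝ) (half_pos hε)] with y hy
      simpa [Real.dist_eq] using hy
    exact (hp (A + i * δ)).eventually hy
  have h2 : ∀ᶠ x : ℝ in atTop, X₀ - A ≤ x := eventually_ge_atTop _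
  obtain ⟨X, hX⟩ := eventually_atTop.mp (h1.and h2)
  refine ⟨X, fun x hx u hu => ?_⟩
  obtain ⟨hg, hx2⟩ := hX x hx
  have huA : 0 ≤ u - A := sub_nonneg.mpr hu.1
  set i : ℕ := ⌊(u - A) / δ⌋₊ with hi
  have hiN : i ∈ Finset.range (N+1) := by
    rw [Finset.mem_range, Nat.lt_succ_iff, hi, hN]
    exact le_trans (Nat.floor_mono (by gcongr; linarith [hu.2])) (Nat.floor_le_ceil _)
  set v : ℝ := A + i * δ with hv
  have hfl : (i:ℝ) ≤ (u - A) / δ := Nat.floor_le (div_nonneg huA hδ.le)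
  have hfl2 : (u - A) / δ < i + 1 := Nat.lt_floor_add_one _
  have hv1 : v ≤ u := by
    rw [hv]
    have : (i:ℝ) * δ ≤ (u - A) / δ * δ := by gcongr
    rw [div_mul_cancel₀ _ (ne_of_gt hδ)] at this
    linarith
  have hv2 : u - v ≤ δ := by
    rw [hv]
    have : (u - A) / δ * δ < ((i:ℝ) + 1) * δ := by gcongr
    rw [div_mul_cancel₀ _ (ne_of_gt hδ)] at this
    linarith
  have e1 : h (x + u) - h x = (h ((x + v) + (u - v)) - h (x + v)) + (h (x + v) - h x) := by
    ring_nf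
  rw [e1]
  have b1 : |h ((x + v) + (u - v)) - h (x + v)| ≤ ε / 2 := by
    apply hX₀ (x + v) _ (u - v) ⟨sub_nonneg.mpr hv1, le_trans hv2 (by linarith)⟩
    · have : A ≤ v := by
        rw [hv]; nlinarith [Nat.cast_nonneg (α := ℝ) i, hδ.le]
      linarith
  have b2 : |h (x + v) - h x| ≤ ε / 2 := hg i hiN
  calc |(h ((x + v) + (u - v)) - h (x + v)) + (h (x + v) - h x)|
      ≤ |h ((x + v) + (u - v)) - h (x + v)| + |h (x + v) - h x| := abs_add_le _ _
    _ ≤ ε / 2 + ε / 2 := add_le_add b1 b2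
    _ = ε := by ring


lemma coord_le_norm' (y : E2) (i : Fin 2) : |y i| ≤ ‖y‖ := by
  rw [EuclideanSpace.norm_eq, ← Real.sqrt_sq_eq_abs]
  apply Real.sqrt_le_sqrt
  rw [Fin.sum_univ_two]
  fin_cases i <;> simp [Real.norm_eq_abs, sq_abs] <;>
    [linarith [sq_nonneg (y 1)]; linarith [sq_nonneg (y 0)]]

lemma norm_le_one' (y : E2) (h0 : |y 0| ≤ 1/2) (h1 : |y 1| ≤ 1/2) : ‖y‖ ≤ 1 := by
  rw [EuclideanSpace.norm_eq, Fin.sum_univ_two]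
  have hb : ‖y 0‖ ^ 2 + ‖y 1‖ ^ 2 ≤ 1 := by
    simp only [Real.norm_eq_abs]
    nlinarith [abs_nonneg (y 0), abs_nonneg (y 1)]
  calc Real.sqrt (‖y 0‖ ^ 2 + ‖y 1‖ ^ 2) ≤ Real.sqrt 1 := Real.sqrt_le_sqrt hb
    _ = 1 := Real.sqrt_one

lemma key' (L : ℝ → ℝ) (hLpos : ∀ x : ℝ, 0 < x → 0 < L x)
    (hSV : ∀ δ : ℝ, 0 < δ → Tendsto (fun x => L (δ * x) / L x) (nhdsWithin 0 (Set.Ioi 0)) (nhds 1))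
    (hLc : ContinuousOn L (Set.Ioi 0)) (M : ℝ) (hM : 1 ≤ M) {ε : ℝ} (hε : 0 < ε) :
    ∃ N : ℕ, 1 ≤ N ∧ ∀ n : ℕ, N ≤ n → ∀ s ∈ Icc (1/2 : ℝ) M,
      |L (s / (n:ℝ)) / L (1 / (n:ℝ)) - 1| ≤ ε := by
  set g : ℝ → ℝ := fun x => Real.log (L (Real.exp (-x))) with hg
  have hgc : Continuous g := by
    rw [continuous_iff_continuousAt]
    intro x
    have hLa : ContinuousAt L (Real.exp (-x)) :=
      hLc.continuousAt (isOpen_Ioi.mem_nhds (Real.exp_pos _))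
    have hexp : ContinuousAt (fun x : ℝ => Real.exp (-x)) x := by fun_prop
    have h1 : ContinuousAt (fun x : ℝ => L (Real.exp (-x))) x := ContinuousAt.comp (g := L) (f := fun x : ℝ => Real.exp (-x)) hLa hexp
    have hlog : ContinuousAt Real.log (L (Real.exp (-x))) :=
      Real.continuousAt_log (ne_of_gt (hLpos _ (Real.exp_pos _)))
    exact ContinuousAt.comp (g := Real.log) (f := fun x : ℝ => L (Real.exp (-x))) hlog h1
  have hp : ∀ u : ℝ, Tendsto (fun x => g (x + u) - g x) atTop (nhds 0) := by
    intro u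
    have h2 : Tendsto (fun x : ℝ => Real.exp (-x)) atTop (nhdsWithin 0 (Set.Ioi 0)) :=
      Real.tendsto_exp_atBot_nhdsGT.comp tendsto_neg_atTop_atBot
    have h1 := (hSV (Real.exp (-u)) (Real.exp_pos _)).comp h2
    have h3 := (Real.continuousAt_log one_ne_zero).tendsto.comp h1
    rw [Real.log_one] at h3
    refine h3.congr fun x => ?_
    show Real.log (L (Real.exp (-u) * Real.exp (-x)) / L (Real.exp (-x))) = _
    rw [Real.log_div (ne_of_gt (hLpos _ (mul_pos (Real.exp_pos _) (Real.exp_pos _))))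
      (ne_of_gt (hLpos _ (Real.exp_pos _))), ← Real.exp_add]
    have : -u + -x = -(x + u) := by ring
    rw [this]
  have hratio : ∀ n : ℕ, 1 ≤ n → ∀ s : ℝ, 0 < s →
      L (s / (n:ℝ)) / L (1 / (n:ℝ)) =
        Real.exp (g (Real.log (n:ℝ) + (-Real.log s)) - g (Real.log (n:ℝ))) := by
    intro n hn s hs
    have hn' : (0:ℝ) < (n:ℝ) := by exact_mod_cast hn
    have ea : Real.exp (-(Real.log (n:ℝ) + -Real.log s)) = s / (n:ℝ) := by
      rw [show -(Real.log (n:ℝ) + -Real.log s) = Real.log s - Real.log (n:ℝ) by ring,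
        Real.exp_sub, Real.exp_log hs, Real.exp_log hn']
    have eb : Real.exp (-Real.log (n:ℝ)) = 1 / (n:ℝ) := by
      rw [Real.exp_neg, Real.exp_log hn', one_div]
    rw [hg]
    simp only []
    rw [Real.exp_sub, Real.exp_log (hLpos _ (Real.exp_pos _)),
      Real.exp_log (hLpos _ (Real.exp_pos _)), ea, eb]
  set ε' : ℝ := min 1 (ε / 2) with hε'
  have hε'pos : 0 < ε' := lt_min one_pos (half_pos hε)
  obtain ⟨X, hX⟩ := uct g hgc hp (-Real.log M) (Real.log 2) hε'pos
  refine ⟨max 1 (⌈Real.exp X⌉₊ + 1), le_max_left _ _, fun n hn s hs => ?_⟩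
  have hn1 : 1 ≤ n := le_trans (le_max_left _ _) hn
  have hn' : (0:ℝ) < (n:ℝ) := by exact_mod_cast hn1
  have hs0 : (0:ℝ) < s := lt_of_lt_of_le one_half_pos hs.1
  have hlogn : X ≤ Real.log (n:ℝ) := by
    have h1 : Real.exp X ≤ (n:ℝ) := by
      have h2 : (⌈Real.exp X⌉₊ : ℝ) ≤ (n:ℝ) := by
        have : ⌈Real.exp X⌉₊ ≤ n := le_trans (Nat.le_succ _) (le_trans (le_max_right _ _) hn)
        exact_mod_cast this
      exact le_trans (Nat.le_ceil _) h2
    calc X = Real.log (Real.exp X) := (Real.log_exp X).symm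
      _ ≤ Real.log (n:ℝ) := Real.log_le_log (Real.exp_pos X) h1
  have hu : -Real.log s ∈ Icc (-Real.log M) (Real.log 2) := by
    constructor
    · have : Real.log s ≤ Real.log M := Real.log_le_log hs0 (le_trans hs.2 (le_refl M))
      linarith
    · rw [← Real.log_inv]
      apply Real.log_le_log (inv_pos.mpr hs0)
      rw [inv_le_comm₀ hs0 two_pos]
      linarith [hs.1]
  have ht := hX (Real.log (n:ℝ)) hlogn (-Real.log s) hu
  rw [hratio n hn1 s hs0]
  have h1ε : |g (Real.log (n:ℝ) + -Real.log s) - g (Real.log (n:ℝ))| ≤ 1 :=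
    le_trans ht (min_le_left _ _)
  calc |Real.exp (g (Real.log (n:ℝ) + -Real.log s) - g (Real.log (n:ℝ))) - 1|
      ≤ 2 * |g (Real.log (n:ℝ) + -Real.log s) - g (Real.log (n:ℝ))| :=
        Real.abs_exp_sub_one_le h1ε
    _ ≤ 2 * ε' := by linarith
    _ ≤ ε := by
        have := min_le_right 1 (ε / 2)
        rw [hε'] at *
        linarith [min_le_right 1 (ε/2)]


theorem stmt4 (α : ℝ)
    (L : ℝ → ℝ) (hLpos : ∀ x : ℝ, 0 < x → 0 < L x)
    (hSV : SlowlyVaryingAtZero L)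
    (hA1 : ContDiffOn ℝ 1 L (Set.Ioi 0))
    (hA1' : ∀ u : ℝ, 0 < u → ∃ ε > (0 : ℝ), ∀ x ∈ Set.Ioc u (Real.sqrt 2), ε ≤ L x)
    (C : ℝ) (hC : 0 < C)
    (hA4 : ∀ x ∈ Set.Ioc (0 : ℝ) 1, |deriv L x| ≤ C * (1 + x⁻¹))
    (j : ℤ × ℤ) (hj : j ≠ 0) (bj : E2) (hbj : bj ∈ sqC (jv j) 1) :
    Tendsto (fun n : ℕ => ∫ x in sqC (jv j) 1,
        (‖x‖ ^ α * (L (‖x‖ / n) / L (1 / n)) - ‖bj‖ ^ α * (L (‖bj‖ / n) / L (1 / n))) ^ 2)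
      atTop (nhds (∫ x in sqC (jv j) 1, (‖x‖ ^ α - ‖bj‖ ^ α) ^ 2)) := by
  classical
  set c : E2 := jv j with hcdef
  set S : Set E2 := sqC c 1 with hSdef
  set M : ℝ := ‖c‖ + 1 with hMdef
  have hM1 : (1:ℝ) ≤ M := by
    have := norm_nonneg c; rw [hMdef]; linarith
  have hM0 : (0:ℝ) < M := lt_of_lt_of_le one_pos hM1
  -- membership bounds
  have hmem : ∀ x ∈ S, ‖x‖ ∈ Icc (1/2 : ℝ) M := by
    intro x hx
    obtain ⟨hx0, hx1⟩ := hx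
    rw [show (1:ℝ)/2 = 1/2 from rfl] at hx0 hx1
    constructor
    · have hcase : j.1 ≠ 0 ∨ j.2 ≠ 0 := by
        by_contra hcon
        push_neg at hcon
        exact hj (Prod.ext_iff.mpr ⟨hcon.1, hcon.2⟩)
      rcases hcase with h | h
      · have h1 : (1:ℝ) ≤ |(j.1:ℝ)| := by
          have := Int.one_le_abs h
          exact_mod_cast this
        have h2 : c 0 = (j.1:ℝ) := by simp [hcdef, jv]
        have h3 : |c 0| - |x 0| ≤ |x 0 - c 0| := by
          rw [abs_sub_comm]; exact abs_sub_abs_le_abs_sub _ _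
        have h4 := coord_le_norm' x 0
        rw [h2] at h3 hx0
        linarith
      · have h1 : (1:ℝ) ≤ |(j.2:ℝ)| := by
          have := Int.one_le_abs h
          exact_mod_cast this
        have h2 : c 1 = (j.2:ℝ) := by simp [hcdef, jv]
        have h3 : |c 1| - |x 1| ≤ |x 1 - c 1| := by
          rw [abs_sub_comm]; exact abs_sub_abs_le_abs_sub _ _
        have h4 := coord_le_norm' x 1
        rw [h2] at h3 hx1
        linarith
    · have hd : ‖x - c‖ ≤ 1 := by
        apply norm_le_one'
        · have : (x - c) 0 = x 0 - c 0 := rfl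
          rw [this]; exact hx0
        · have : (x - c) 1 = x 1 - c 1 := rfl
          rw [this]; exact hx1
      calc ‖x‖ = ‖c + (x - c)‖ := by congr 1; abel
        _ ≤ ‖c‖ + ‖x - c‖ := norm_add_le _ _
        _ ≤ M := by rw [hMdef]; linarith
  have hbjmem := hmem bj hbj
  -- compactness of S
  have hSsub : S ⊆ Metric.closedBall c 1 := by
    intro x hx
    obtain ⟨hx0, hx1⟩ := hx
    rw [Metric.mem_closedBall, dist_eq_norm]
    apply norm_le_one'
    · have : (x - c) 0 = x 0 - c 0 := rfl
      rw [this]; exact hx0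
    · have : (x - c) 1 = x 1 - c 1 := rfl
      rw [this]; exact hx1
  have hc0cont : Continuous fun x : E2 => x 0 :=
    (EuclideanSpace.proj (0 : Fin 2) (𝕜 := ℝ)).continuous
  have hc1cont : Continuous fun x : E2 => x 1 :=
    (EuclideanSpace.proj (1 : Fin 2) (𝕜 := ℝ)).continuous
  have hScl : IsClosed S := by
    rw [hSdef]
    have : sqC c 1 = {x : E2 | |x 0 - c 0| ≤ 1/2} ∩ {x : E2 | |x 1 - c 1| ≤ 1/2} := by
      ext x; simp [sqC]
    rw [this]
    apply IsClosed.inter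
    · exact isClosed_le ((hc0cont.sub continuous_const).abs) continuous_const
    · exact isClosed_le ((hc1cont.sub continuous_const).abs) continuous_const
  have hScp : IsCompact S :=
    Metric.isCompact_of_isClosed_isBounded hScl (Metric.isBounded_closedBall.subset hSsub)
  have hSfin : volume S < ⊤ := hScp.measure_lt_top
  have hSm : MeasurableSet S := hScl.measurableSet
  -- the constant K
  set K : ℝ := (1/2 : ℝ) ^ α + M ^ α with hKdef
  have hK : 0 < K := by
    rw [hKdef]
    have := Real.rpow_pos_of_pos (one_half_pos (α := ℝ)) α
    have := Real.rpow_pos_of_pos hM0 α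
    linarith
  have hKb : ∀ s ∈ Icc (1/2 : ℝ) M, s ^ α ≤ K := by
    intro s hs
    have hs0 : (0:ℝ) < s := lt_of_lt_of_le one_half_pos hs.1
    rw [hKdef]
    rcases le_or_gt 0 α with hα | hα
    · have h1 : s ^ α ≤ M ^ α := Real.rpow_le_rpow hs0.le hs.2 hα
      have h2 : (0:ℝ) ≤ (1/2 : ℝ) ^ α := (Real.rpow_pos_of_pos one_half_pos α).le
      linarith
    · have h1 : s ^ α ≤ (1/2 : ℝ) ^ α := Real.rpow_le_rpow_of_nonpos one_half_pos hs.1 hα.le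
      have h2 : (0:ℝ) ≤ M ^ α := (Real.rpow_pos_of_pos hM0 α).le
      linarith
  -- continuity of rpow on S
  have hrpow : ContinuousOn (fun x : E2 => ‖x‖ ^ α) S := by
    intro x hx
    have hx0 : (0:ℝ) < ‖x‖ := lt_of_lt_of_le one_half_pos (hmem x hx).1
    exact ((Real.continuousAt_rpow_const ‖x‖ α (Or.inl (ne_of_gt hx0))).comp
      continuous_norm.continuousAt).continuousWithinAt
  have hLc : ContinuousOn L (Set.Ioi 0) := hA1.continuousOn
  -- main estimate
  rw [Metric.tendsto_atTop]
  intro ε hε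
  set V : ℝ := (volume S).toReal with hVdef
  have hV0 : (0:ℝ) ≤ V := ENNReal.toReal_nonneg
  have hden : (0:ℝ) < 12 * K ^ 2 * V + 1 := by positivity
  set ε₁ : ℝ := min 1 (ε / (12 * K ^ 2 * V + 1)) with hε₁def
  have hε₁pos : 0 < ε₁ := lt_min one_pos (div_pos hε hden)
  have hε₁1 : ε₁ ≤ 1 := min_le_left _ _
  obtain ⟨N, hN1, hN⟩ := key' L hLpos hSV hLc M hM1 hε₁pos
  refine ⟨N, fun n hn => ?_⟩
  have hn1 : 1 ≤ n := le_trans hN1 hn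
  have hnR : (0:ℝ) < (n:ℝ) := by exact_mod_cast hn1
  -- integrability
  have hLncont : ContinuousOn (fun x : E2 => L (‖x‖ / (n:ℝ))) S := by
    intro x hx
    have hx0 : (0:ℝ) < ‖x‖ := lt_of_lt_of_le one_half_pos (hmem x hx).1
    have hpos : (0:ℝ) < ‖x‖ / (n:ℝ) := div_pos hx0 hnR
    have hLa : ContinuousAt L (‖x‖ / (n:ℝ)) := hLc.continuousAt (isOpen_Ioi.mem_nhds hpos)
    exact (ContinuousAt.comp (g := L) (f := fun x : E2 => ‖x‖ / (n:ℝ)) hLa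
      ((continuous_norm.div_const _).continuousAt)).continuousWithinAt
  have hfn_cont : ContinuousOn (fun x : E2 =>
      (‖x‖ ^ α * (L (‖x‖ / (n:ℝ)) / L (1 / (n:ℝ))) -
        ‖bj‖ ^ α * (L (‖bj‖ / (n:ℝ)) / L (1 / (n:ℝ)))) ^ 2) S :=
    ((hrpow.mul (hLncont.div_const _)).sub continuousOn_const).pow 2
  have hf_cont : ContinuousOn (fun x : E2 => (‖x‖ ^ α - ‖bj‖ ^ α) ^ 2) S :=
    ((hrpow.sub continuousOn_const).pow 2)
  have hint1 : IntegrableOn (fun x : E2 =>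
      (‖x‖ ^ α * (L (‖x‖ / (n:ℝ)) / L (1 / (n:ℝ))) -
        ‖bj‖ ^ α * (L (‖bj‖ / (n:ℝ)) / L (1 / (n:ℝ)))) ^ 2) S :=
    hfn_cont.integrableOn_compact hScp
  have hint2 : IntegrableOn (fun x : E2 => (‖x‖ ^ α - ‖bj‖ ^ α) ^ 2) S :=
    hf_cont.integrableOn_compact hScp
  rw [Real.dist_eq, ← Real.norm_eq_abs, ← MeasureTheory.integral_sub hint1 hint2]
  have hbound : ∀ x ∈ S,
      ‖(‖x‖ ^ α * (L (‖x‖ / (n:ℝ)) / L (1 / (n:ℝ))) -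
        ‖bj‖ ^ α * (L (‖bj‖ / (n:ℝ)) / L (1 / (n:ℝ)))) ^ 2 -
        (‖x‖ ^ α - ‖bj‖ ^ α) ^ 2‖ ≤ 12 * K ^ 2 * ε₁ := by
    intro x hx
    set a : ℝ := ‖x‖ ^ α with hadef
    set b : ℝ := ‖bj‖ ^ α with hbdef
    set Ra : ℝ := L (‖x‖ / (n:ℝ)) / L (1 / (n:ℝ)) with hRadef
    set Rb : ℝ := L (‖bj‖ / (n:ℝ)) / L (1 / (n:ℝ)) with hRbdef
    have hRa : |Ra - 1| ≤ ε₁ := hN n hn ‖x‖ (hmem x hx)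
    have hRb : |Rb - 1| ≤ ε₁ := hN n hn ‖bj‖ hbjmem
    have hKa : |a| ≤ K := by
      rw [hadef, abs_of_nonneg (Real.rpow_nonneg (norm_nonneg x) α)]
      exact hKb _ (hmem x hx)
    have hKbj : |b| ≤ K := by
      rw [hbdef, abs_of_nonneg (Real.rpow_nonneg (norm_nonneg bj) α)]
      exact hKb _ hbjmem
    have he1 : |a * Ra - b * Rb - (a - b)| ≤ 2 * K * ε₁ := by
      have he : a * Ra - b * Rb - (a - b) = a * (Ra - 1) - b * (Rb - 1) := by ring
      rw [he]
      calc |a * (Ra - 1) - b * (Rb - 1)| ≤ |a * (Ra - 1)| + |b * (Rb - 1)| := abs_sub _ _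
        _ = |a| * |Ra - 1| + |b| * |Rb - 1| := by rw [abs_mul, abs_mul]
        _ ≤ K * ε₁ + K * ε₁ :=
            add_le_add (mul_le_mul hKa hRa (abs_nonneg _) hK.le)
              (mul_le_mul hKbj hRb (abs_nonneg _) hK.le)
        _ = 2 * K * ε₁ := by ring
    have hD : |a - b| ≤ 2 * K := by
      calc |a - b| ≤ |a| + |b| := abs_sub _ _
        _ ≤ K + K := add_le_add hKa hKbj
        _ = 2 * K := by ring
    have heq : (a * Ra - b * Rb) ^ 2 - (a - b) ^ 2 =
        (a * Ra - b * Rb - (a - b)) * (2 * (a - b) + (a * Ra - b * Rb - (a - b))) := by ring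
    rw [Real.norm_eq_abs, heq, abs_mul]
    have h2 : |2 * (a - b) + (a * Ra - b * Rb - (a - b))| ≤ 6 * K := by
      calc |2 * (a - b) + (a * Ra - b * Rb - (a - b))|
          ≤ |2 * (a - b)| + |a * Ra - b * Rb - (a - b)| := abs_add_le _ _
        _ = 2 * |a - b| + |a * Ra - b * Rb - (a - b)| := by rw [abs_mul]; norm_num
        _ ≤ 2 * (2 * K) + 2 * K * ε₁ := add_le_add (by linarith) he1
        _ ≤ 2 * (2 * K) + 2 * K * 1 := by nlinarith [hK.le]
        _ = 6 * K := by ring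
    calc |a * Ra - b * Rb - (a - b)| * |2 * (a - b) + (a * Ra - b * Rb - (a - b))|
        ≤ (2 * K * ε₁) * (6 * K) :=
          mul_le_mul he1 h2 (abs_nonneg _) (by positivity)
      _ = 12 * K ^ 2 * ε₁ := by ring
  calc ‖∫ x in S, ((‖x‖ ^ α * (L (‖x‖ / (n:ℝ)) / L (1 / (n:ℝ))) -
        ‖bj‖ ^ α * (L (‖bj‖ / (n:ℝ)) / L (1 / (n:ℝ)))) ^ 2 -
        (‖x‖ ^ α - ‖bj‖ ^ α) ^ 2)‖
      ≤ (12 * K ^ 2 * ε₁) * V :=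
        MeasureTheory.norm_setIntegral_le_of_norm_le_const hSfin hbound
    _ < ε := by
        have h1 : ε₁ ≤ ε / (12 * K ^ 2 * V + 1) := min_le_right _ _
        have h2 : ε₁ * (12 * K ^ 2 * V + 1) ≤ ε := by
          rw [← le_div_iff₀ hden]; exact h1
        nlinarith [hε₁pos]
end
end
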